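/- For every integer d ≥ 2 there exists a univariate real polynomial p with exactly d nonzero coefficients (both even and odd exponents occurring) such that the set of absolute values of the nonzero real roots of p has exactly 2d − 3 elements; for instance p(x) = x·∏_{i=1}^{d−2}(x² − i) + t works for all sufficiently small t > 0. Moreover, for every integer d ≥ 1 there exists a univariate real polynomial q with exactly d nonzero coefficients, all of whose exponents are even, such that the set of absolute values of the nonzero real roots of q has exactly d − 1 elements. -/

import Mathlib

open Polynomial Finset

noncomputable def PP (n : ℕ) : Polynomial ℝ := ∏ i ∈ Finset.range n, (X ^ 2 - C ((i:ℝ)+1))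

lemma PP_coeff (n : ℕ) :
    (∀ j ≤ n, 0 < (-1:ℝ)^(n-j) * (PP n).coeff (2*j)) ∧
    (∀ m, ¬ 2 ∣ m → (PP n).coeff m = 0) ∧
    (∀ m, 2*n < m → (PP n).coeff m = 0) := by
  induction n with
  | zero =>
    refine ⟨?_, ?_, ?_⟩
    · intro j hj; interval_cases j; simp [PP]
    · intro m hm
      rcases Nat.eq_zero_or_pos m with h | h
      · exact absurd (h ▸ dvd_zero 2) hm
      · simp [PP, coeff_one, Nat.pos_iff_ne_zero.mp h]
    · intro m hm; simp [PP, coeff_one]; omega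
  | succ n ih =>
    obtain ⟨ih1, ih2, ih3⟩ := ih
    have hrw : PP (n+1) = PP n * X^2 - C ((n:ℝ)+1) * PP n := by
      rw [PP, Finset.prod_range_succ, PP]; ring
    have hc : ∀ m, (PP (n+1)).coeff m =
        (if 2 ≤ m then (PP n).coeff (m-2) else 0) - ((n:ℝ)+1) * (PP n).coeff m := by
      intro m; rw [hrw, coeff_sub, coeff_mul_X_pow', coeff_C_mul]
    have hcpos : (0:ℝ) < (n:ℝ)+1 := by positivity
    refine ⟨?_, ?_, ?_⟩
    · intro j hj
      rw [hc]
      rcases Nat.eq_zero_or_pos j with rfl | hj0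
      · have h1 := ih1 0 (Nat.zero_le n)
        simp only [Nat.sub_zero] at h1 ⊢
        rw [Nat.mul_zero, if_neg (by omega)]
        have e : (-1:ℝ)^(n+1) * (0 - ((n:ℝ)+1) * (PP n).coeff 0)
            = ((n:ℝ)+1) * ((-1:ℝ)^n * (PP n).coeff 0) := by rw [pow_succ]; ring
        rw [e]; positivity
      · rcases Nat.lt_or_ge j (n+1) with hjn | hjn
        · have h1 := ih1 (j-1) (by omega)
          have h2 := ih1 j (by omega)
          have e1 : 2 ≤ 2*j := by omega
          have e2 : 2*j - 2 = 2*(j-1) := by omega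
          rw [if_pos e1, e2]
          have e3 : n - (j-1) = n + 1 - j := by omega
          rw [e3] at h1
          have e4 : (-1:ℝ)^(n+1-j) * ((PP n).coeff (2*(j-1)) - ((n:ℝ)+1) * (PP n).coeff (2*j))
              = (-1:ℝ)^(n+1-j) * (PP n).coeff (2*(j-1))
                + ((n:ℝ)+1) * ((-1:ℝ)^(n-j) * (PP n).coeff (2*j)) := by
            have : (-1:ℝ)^(n+1-j) = -(-1:ℝ)^(n-j) := by
              have : n+1-j = (n-j)+1 := by omega
              rw [this]; ring
            rw [this]; ring
          rw [e4]; positivity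
        · have hj' : j = n+1 := by omega
          subst hj'
          have h1 := ih1 n le_rfl
          simp only [Nat.sub_self, pow_zero, one_mul] at h1 ⊢
          have e1 : 2 ≤ 2*(n+1) := by omega
          have e2 : 2*(n+1) - 2 = 2*n := by omega
          rw [if_pos e1, e2, ih3 (2*(n+1)) (by omega)]
          simpa using h1
    · intro m hm
      rw [hc, ih2 m hm]
      rcases Nat.lt_or_ge m 2 with h | h
      · rw [if_neg (by omega)]; ring
      · rw [if_pos h, ih2 (m-2) (by omega)]; ring
    · intro m hm
      rw [hc, ih3 m (by omega), if_pos (by omega), ih3 (m-2) (by omega)]; ring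

lemma neg_one_pow_congr' {a b : ℕ} (h : a % 2 = b % 2) : (-1:ℝ)^a = (-1)^b := by
  conv_lhs => rw [← Nat.mod_add_div a 2]
  conv_rhs => rw [← Nat.mod_add_div b 2]
  rw [pow_add, pow_add, pow_mul, pow_mul, h]
  norm_num

lemma PP_support (n : ℕ) :
    (PP n).support = (Finset.range (n+1)).image (fun j => 2*j) := by
  obtain ⟨h1, h2, h3⟩ := PP_coeff n
  ext m
  simp only [mem_support_iff, Finset.mem_image, Finset.mem_range]
  constructor
  · intro hm
    rcases Nat.even_or_odd m with ⟨j, hj⟩ | ho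
    · refine ⟨j, ?_, by omega⟩
      by_contra h
      exact hm (h3 m (by omega))
    · obtain ⟨k, hk⟩ := ho
      exact absurd (h2 m (by omega)) hm
  · rintro ⟨j, hj, rfl⟩
    have := h1 j (by omega)
    intro h0
    rw [h0] at this
    simp at this

lemma PP_support_card (n : ℕ) : (PP n).support.card = n + 1 := by
  rw [PP_support, Finset.card_image_of_injective _ (fun a b h => by omega)]
  simp

lemma PP_ne_zero (n : ℕ) : PP n ≠ 0 := by
  intro h
  have := PP_support_card n
  rw [h] at this
  simp at this

lemma PP_natDegree (n : ℕ) : (PP n).natDegree = 2 * n := by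
  rw [PP, Polynomial.natDegree_prod]
  · have : ∀ i ∈ Finset.range n, (X^2 - C ((i:ℝ)+1)).natDegree = 2 := by
      intro i _
      exact Polynomial.natDegree_X_pow_sub_C
    rw [Finset.sum_congr rfl this]
    simp [Nat.mul_comm]
  · intro i _
    exact (Polynomial.monic_X_pow_sub_C _ (by norm_num)).ne_zero

lemma PP_eval (n : ℕ) (x : ℝ) : (PP n).eval x = ∏ i ∈ Finset.range n, (x^2 - ((i:ℝ)+1)) := by
  simp [PP, eval_prod]

lemma PP_eval_neg (n : ℕ) (x : ℝ) : (PP n).eval (-x) = (PP n).eval x := by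
  simp [PP_eval]

lemma prod_sign (n k : ℕ) (hk : k ≤ n) :
    0 < (-1:ℝ)^(n-k) * ∏ i ∈ Finset.range n, (((k:ℝ)+1/2) - ((i:ℝ)+1)) := by
  induction n, hk using Nat.le_induction with
  | base =>
    rw [Nat.sub_self, pow_zero, one_mul]
    apply Finset.prod_pos
    intro i hi
    rw [Finset.mem_range] at hi
    have : (i:ℝ) + 1 ≤ k := by exact_mod_cast hi
    linarith
  | succ n hkn ih =>
    rw [Finset.prod_range_succ]
    have e : n + 1 - k = (n - k) + 1 := by omega
    rw [e, pow_succ]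
    have hneg : ((k:ℝ)+1/2) - ((n:ℝ)+1) < 0 := by
      have : (k:ℝ) ≤ n := by exact_mod_cast hkn
      linarith
    nlinarith [ih]

lemma PP_eval_sign (n k : ℕ) (hk : k ≤ n) :
    0 < (-1:ℝ)^(n-k) * (PP n).eval (Real.sqrt ((k:ℝ)+1/2)) := by
  have hsq : (Real.sqrt ((k:ℝ)+1/2))^2 = (k:ℝ)+1/2 := Real.sq_sqrt (by positivity)
  rw [PP_eval, hsq]
  exact prod_sign n k hk

lemma part2 (d : ℕ) (hd : 1 ≤ d) : ∃ q : Polynomial ℝ,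
    q.support.card = d ∧ (∀ m ∈ q.support, Even m) ∧
    {s : ℝ | ∃ r : ℝ, r ≠ 0 ∧ q.eval r = 0 ∧ s = |r|}.ncard = d - 1 := by
  set n := d - 1 with hn
  refine ⟨PP n, by rw [PP_support_card]; omega, ?_, ?_⟩
  · intro m hm
    rw [PP_support] at hm
    simp only [Finset.mem_image] at hm
    obtain ⟨j, _, rfl⟩ := hm
    exact even_two_mul j
  · have hS : {s : ℝ | ∃ r : ℝ, r ≠ 0 ∧ (PP n).eval r = 0 ∧ s = |r|}
        = (fun i : ℕ => Real.sqrt ((i:ℝ)+1)) '' (Set.Iio n) := by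
      ext s
      simp only [Set.mem_setOf_eq, Set.mem_image, Set.mem_Iio]
      constructor
      · rintro ⟨r, hr0, hre, rfl⟩
        rw [PP_eval, Finset.prod_eq_zero_iff] at hre
        obtain ⟨i, hi, hie⟩ := hre
        rw [Finset.mem_range] at hi
        refine ⟨i, hi, ?_⟩
        rw [← Real.sqrt_sq_eq_abs]
        congr 1
        linarith
      · rintro ⟨i, hi, rfl⟩
        have h0 : (0:ℝ) < (i:ℝ) + 1 := by positivity
        refine ⟨Real.sqrt ((i:ℝ)+1), by positivity, ?_, (abs_of_pos (by positivity)).symm⟩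
        rw [PP_eval]
        apply Finset.prod_eq_zero (Finset.mem_range.mpr hi)
        rw [Real.sq_sqrt h0.le]
        ring
    rw [hS, Set.ncard_image_of_injOn, ← Finset.coe_Iio, Set.ncard_coe_finset, Nat.card_Iio]
    intro a _ b _ hab
    simp only at hab
    have h := (Real.sqrt_inj (by positivity) (by positivity)).mp hab
    have : (a:ℝ) = b := by linarith
    exact_mod_cast this

lemma part1 (d : ℕ) (hd : 2 ≤ d) : ∃ t₀ : ℝ, 0 < t₀ ∧ ∀ t : ℝ, 0 < t → t < t₀ →
    ∃ p : Polynomial ℝ,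
      p = X * (∏ i ∈ Finset.range (d - 2), (X ^ 2 - C ((i : ℝ) + 1))) + C t ∧
      p.support.card = d ∧
      (∃ m ∈ p.support, Even m) ∧ (∃ m ∈ p.support, Odd m) ∧
      {s : ℝ | ∃ r : ℝ, r ≠ 0 ∧ p.eval r = 0 ∧ s = |r|}.ncard = 2 * d - 3 := by
  set n := d - 2 with hn
  set f : Polynomial ℝ := X * PP n with hf
  set v : ℕ → ℝ := fun k => Real.sqrt ((k:ℝ)+1/2) with hv
  have hv_pos : ∀ k, 0 < v k := fun k => Real.sqrt_pos.mpr (by positivity)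
  have hv_mono : ∀ k l : ℕ, k < l → v k < v l := by
    intro k l hkl
    apply Real.sqrt_lt_sqrt (by positivity)
    have : (k:ℝ) < l := by exact_mod_cast hkl
    linarith
  have hfe : ∀ x : ℝ, f.eval x = x * (PP n).eval x := by intro x; simp [hf]
  have hfodd : ∀ x : ℝ, f.eval (-x) = - f.eval x := by
    intro x; rw [hfe, hfe, PP_eval_neg]; ring
  have hf_sign : ∀ k ≤ n, 0 < (-1:ℝ)^(n-k) * f.eval (v k) := by
    intro k hk
    have h1 := PP_eval_sign n k hk
    have h2 := hv_pos k
    rw [hfe]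
    calc (0:ℝ) < v k * ((-1:ℝ)^(n-k) * (PP n).eval (Real.sqrt ((k:ℝ)+1/2))) := by positivity
      _ = (-1:ℝ)^(n-k) * (v k * (PP n).eval (v k)) := by rw [hv]; ring
  have hf_ne : ∀ k ∈ Finset.range (n+1), 0 < |f.eval (v k)| := by
    intro k hk
    rw [Finset.mem_range] at hk
    have := hf_sign k (by omega)
    rw [abs_pos]
    intro h0
    rw [h0, mul_zero] at this
    exact lt_irrefl 0 this
  set t₀ : ℝ := (Finset.range (n+1)).inf' ⟨0, by simp⟩ (fun k => |f.eval (v k)|) with ht₀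
  have ht₀pos : 0 < t₀ := Finset.lt_inf'_iff _ |>.mpr hf_ne
  refine ⟨t₀, ht₀pos, ?_⟩
  intro t ht htt
  set p : Polynomial ℝ := f + C t with hp
  have hpe : ∀ x : ℝ, p.eval x = f.eval x + t := by intro x; simp [hp]
  -- sample points
  set y : ℕ → ℝ := fun j => if j ≤ n then -(v (n-j)) else v (j-(n+1)) with hy
  have hyle : ∀ j ≤ n, y j = -(v (n-j)) := by intro j hj; simp [hy, hj]
  have hygt : ∀ j, n < j → y j = v (j-(n+1)) := by
    intro j hj; simp [hy, Nat.not_le.mpr hj]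
  have hy_step : ∀ j ≤ 2*n, y j < y (j+1) := by
    intro j hj
    rcases Nat.lt_or_ge j n with h | h
    · rw [hyle j (by omega), hyle (j+1) (by omega)]
      have : v (n-(j+1)) < v (n-j) := hv_mono _ _ (by omega)
      linarith
    · rcases Nat.eq_or_lt_of_le h with heq | h2
      · rw [hyle j (by omega), hygt (j+1) (by omega)]
        have e : j + 1 - (n+1) = 0 := by omega
        have e2 : n - j = 0 := by omega
        rw [e, e2]
        have := hv_pos 0
        linarith
      · rw [hygt j (by omega), hygt (j+1) (by omega)]
        apply hv_mono
        omega
  have hy_absf : ∀ j ≤ 2*n+1, t₀ ≤ |f.eval (y j)| := by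
    intro j hj
    rcases le_or_gt j n with h | h
    · rw [hyle j h, hfodd, abs_neg]
      exact Finset.inf'_le _ (Finset.mem_range.mpr (by omega))
    · rw [hygt j h]
      exact Finset.inf'_le _ (Finset.mem_range.mpr (by omega))
  have hy_fsign : ∀ j ≤ 2*n+1, 0 < (-1:ℝ)^(j+1) * f.eval (y j) := by
    intro j hj
    rcases le_or_gt j n with h | h
    · have h1 := hf_sign (n-j) (by omega)
      have e : n - (n-j) = j := by omega
      rw [e] at h1
      rw [hyle j h, hfodd]
      have e2 : (-1:ℝ)^(j+1) * -(f.eval (v (n-j))) = (-1)^j * f.eval (v (n-j)) := by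
        rw [pow_succ]; ring
      rw [e2]
      exact h1
    · have h1 := hf_sign (j-(n+1)) (by omega)
      have e : n - (j-(n+1)) = 2*n+1-j := by omega
      rw [e] at h1
      rw [hygt j h]
      rw [neg_one_pow_congr' (show (j+1) % 2 = (2*n+1-j) % 2 by omega)]
      exact h1
  have hy_psign : ∀ j ≤ 2*n+1, 0 < (-1:ℝ)^(j+1) * p.eval (y j) := by
    intro j hj
    have hD := hy_fsign j hj
    have hA := hy_absf j hj
    have h1 : |f.eval (y j)| = (-1:ℝ)^(j+1) * f.eval (y j) := by
      rw [← abs_of_pos hD, abs_mul, abs_pow, abs_neg, abs_one, one_pow, one_mul]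
    have h2 : -t ≤ (-1:ℝ)^(j+1) * t := by
      have h3 := neg_abs_le ((-1:ℝ)^(j+1) * t)
      rwa [abs_mul, abs_pow, abs_neg, abs_one, one_pow, one_mul, abs_of_pos ht] at h3
    rw [hpe, mul_add]
    linarith
  -- roots via IVT
  have hroot : ∀ j ≤ 2*n, ∃ r, y j < r ∧ r < y (j+1) ∧ p.eval r = 0 := by
    intro j hj
    have hs1 := hy_psign j (by omega)
    have hs2 := hy_psign (j+1) (by omega)
    have hstep := (hy_step j hj).le
    rcases Nat.even_or_odd j with he | ho
    · have e1 : (-1:ℝ)^(j+1) = -1 := Odd.neg_one_pow (Even.add_one he)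
      have e2 : (-1:ℝ)^(j+1+1) = 1 := Even.neg_one_pow (by
        obtain ⟨k, hk⟩ := he; exact ⟨k+1, by omega⟩)
      rw [e1] at hs1; rw [e2, one_mul] at hs2
      have hmem : (0:ℝ) ∈ Set.Ioo (p.eval (y j)) (p.eval (y (j+1))) := ⟨by linarith, hs2⟩
      obtain ⟨r, hr, hre⟩ := intermediate_value_Ioo hstep (Polynomial.continuousOn p) hmem
      exact ⟨r, hr.1, hr.2, hre⟩
    · have e1 : (-1:ℝ)^(j+1) = 1 := Even.neg_one_pow (Odd.add_one ho)
      have e2 : (-1:ℝ)^(j+1+1) = -1 := Odd.neg_one_pow (by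
        obtain ⟨k, hk⟩ := ho; exact ⟨k+1, by omega⟩)
      rw [e1, one_mul] at hs1; rw [e2] at hs2
      have hmem : (0:ℝ) ∈ Set.Ioo (p.eval (y (j+1))) (p.eval (y j)) := ⟨by linarith, hs1⟩
      obtain ⟨r, hr, hre⟩ := intermediate_value_Ioo' hstep (Polynomial.continuousOn p) hmem
      exact ⟨r, hr.1, hr.2, hre⟩
  have hroot' : ∀ j : ℕ, ∃ r, j ≤ 2*n → (y j < r ∧ r < y (j+1) ∧ p.eval r = 0) := by
    intro j
    by_cases h : j ≤ 2*n
    · obtain ⟨r, hr⟩ := hroot j h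
      exact ⟨r, fun _ => hr⟩
    · exact ⟨0, fun hc => absurd hc h⟩
  choose r hr using hroot'
  have ymono : ∀ b, b ≤ 2*n+1 → ∀ a, a ≤ b → y a ≤ y b := by
    intro b
    induction b with
    | zero =>
      intro _ a ha
      have h0 : a = 0 := Nat.le_zero.mp ha
      exact le_of_eq (congrArg y h0)
    | succ b ih =>
      intro hb a ha
      rcases Nat.eq_or_lt_of_le ha with rfl | h2
      · exact le_refl _
      · exact le_trans (ih (by omega) a (by omega)) (hy_step b (by omega)).le
  have rlt : ∀ i j, i < j → j ≤ 2*n → r i < r j := by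
    intro i j hij hj
    have h1 := hr i (by omega)
    have h2 := hr j hj
    calc r i < y (i+1) := h1.2.1
      _ ≤ y j := ymono j (by omega) (i+1) (by omega)
      _ < r j := h2.1
  have hp0 : p ≠ 0 := by
    intro h0
    have h1 : p.eval 0 = t := by rw [hpe, hfe]; ring
    rw [h0, Polynomial.eval_zero] at h1
    exact absurd h1.symm (ne_of_gt ht)
  have hdeg : p.natDegree = 2*n+1 := by
    have h1 : f.natDegree = 2*n+1 := by
      rw [hf, Polynomial.natDegree_mul Polynomial.X_ne_zero (PP_ne_zero n),
        Polynomial.natDegree_X, PP_natDegree]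
      omega
    rw [hp, Polynomial.natDegree_add_C, h1]
  have hsub : (Finset.range (2*n+1)).image r ⊆ p.roots.toFinset := by
    intro x hx
    rw [Finset.mem_image] at hx
    obtain ⟨j, hj, rfl⟩ := hx
    rw [Finset.mem_range] at hj
    rw [Multiset.mem_toFinset, Polynomial.mem_roots hp0]
    exact (hr j (by omega)).2.2
  have hcard_img : ((Finset.range (2*n+1)).image r).card = 2*n+1 := by
    rw [Finset.card_image_of_injOn, Finset.card_range]
    intro i hi j hj hij
    rw [Finset.mem_coe, Finset.mem_range] at hi hj
    by_contra hne
    rcases Nat.lt_or_ge i j with h | h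
    · exact absurd hij (ne_of_lt (rlt i j h (by omega)))
    · have : j < i := by omega
      exact absurd hij.symm (ne_of_lt (rlt j i this (by omega)))
  have hZcard : p.roots.toFinset.card = 2*n+1 := by
    apply le_antisymm
    · exact le_trans (Multiset.toFinset_card_le _) (le_trans (Polynomial.card_roots' p) hdeg.le)
    · calc 2*n+1 = ((Finset.range (2*n+1)).image r).card := hcard_img.symm
        _ ≤ p.roots.toFinset.card := Finset.card_le_card hsub
  -- absolute values
  have habs : {s : ℝ | ∃ x : ℝ, x ≠ 0 ∧ p.eval x = 0 ∧ s = |x|}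
      = abs '' (p.roots.toFinset : Set ℝ) := by
    ext s
    simp only [Set.mem_setOf_eq, Set.mem_image, Finset.mem_coe, Multiset.mem_toFinset,
      Polynomial.mem_roots hp0, Polynomial.IsRoot.def]
    constructor
    · rintro ⟨x, _, hxe, rfl⟩
      exact ⟨x, hxe, rfl⟩
    · rintro ⟨x, hx, rfl⟩
      refine ⟨x, ?_, hx, rfl⟩
      intro h0
      rw [h0, hpe, hfe] at hx
      have : t = 0 := by linarith [hx]
      exact absurd this.symm (ne_of_lt ht)
  have hinj : Set.InjOn abs (p.roots.toFinset : Set ℝ) := by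
    intro a ha b hb hab
    rw [Finset.mem_coe, Multiset.mem_toFinset, Polynomial.mem_roots hp0,
      Polynomial.IsRoot.def] at ha hb
    rcases abs_eq_abs.mp hab with h | h
    · exact h
    · exfalso
      rw [h] at ha
      rw [hpe] at ha hb
      rw [hfodd] at ha
      linarith
  have hncard : {s : ℝ | ∃ x : ℝ, x ≠ 0 ∧ p.eval x = 0 ∧ s = |x|}.ncard = 2*n+1 := by
    rw [habs, Set.ncard_image_of_injOn hinj, Set.ncard_coe_finset, hZcard]
  -- support
  have hc0 : p.coeff 0 = t := by
    rw [hp, hf]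
    simp [Polynomial.coeff_add, Polynomial.mul_coeff_zero]
  have hcs : ∀ m : ℕ, p.coeff (m+1) = (PP n).coeff m := by
    intro m
    rw [hp, hf, Polynomial.coeff_add, Polynomial.coeff_X_mul, Polynomial.coeff_C,
      if_neg (by omega : ¬ m + 1 = 0), add_zero]
  have hsupp : p.support = insert 0 ((Finset.range (n+1)).image (fun j => 2*j+1)) := by
    ext m
    rw [Polynomial.mem_support_iff]
    cases m with
    | zero =>
      exact ⟨fun _ => Finset.mem_insert_self 0 _, fun _ => by rw [hc0]; exact ne_of_gt ht⟩
    | succ m =>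
      rw [hcs m, ← Polynomial.mem_support_iff, PP_support]
      simp only [Finset.mem_image, Finset.mem_range, Finset.mem_insert]
      constructor
      · rintro ⟨j, hj, rfl⟩
        right; exact ⟨j, hj, rfl⟩
      · rintro (h | ⟨j, hj, hje⟩)
        · omega
        · exact ⟨j, hj, by omega⟩
  have hsupp_card : p.support.card = d := by
    have hinj2 : Function.Injective (fun j : ℕ => 2*j+1) := by
      intro a b h
      simp only [] at h
      omega
    rw [hsupp, Finset.card_insert_of_notMem, Finset.card_image_of_injective _ hinj2]
    · rw [Finset.card_range]; omega
    · intro h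
      rw [Finset.mem_image] at h
      obtain ⟨j, _, hj⟩ := h
      omega
  refine ⟨p, ?_, hsupp_card, ?_, ?_, ?_⟩
  · rw [hp, hf, PP]
  · refine ⟨0, ?_, Even.zero⟩
    rw [hsupp]; exact Finset.mem_insert_self _ _
  · refine ⟨1, ?_, odd_one⟩
    rw [hsupp]
    apply Finset.mem_insert_of_mem
    exact Finset.mem_image.mpr ⟨0, Finset.mem_range.mpr (by omega), rfl⟩
  · rw [hncard]; omega


theorem stmt12 :
    -- sharpness of the bound `2d - 3`, realized by `x · ∏_{i=1}^{d-2} (x² - i) + t`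
    -- for all sufficiently small `t > 0`
    (∀ d : ℕ, 2 ≤ d → ∃ t₀ : ℝ, 0 < t₀ ∧ ∀ t : ℝ, 0 < t → t < t₀ →
      ∃ p : Polynomial ℝ,
        p = X * (∏ i ∈ Finset.range (d - 2), (X ^ 2 - C ((i : ℝ) + 1))) + C t ∧
        p.support.card = d ∧
        (∃ m ∈ p.support, Even m) ∧ (∃ m ∈ p.support, Odd m) ∧
        {s : ℝ | ∃ r : ℝ, r ≠ 0 ∧ p.eval r = 0 ∧ s = |r|}.ncard = 2 * d - 3) ∧
    -- sharpness of the bound `d - 1` in the equal-parity case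
    (∀ d : ℕ, 1 ≤ d → ∃ q : Polynomial ℝ,
      q.support.card = d ∧ (∀ m ∈ q.support, Even m) ∧
      {s : ℝ | ∃ r : ℝ, r ≠ 0 ∧ q.eval r = 0 ∧ s = |r|}.ncard = d - 1) := by
  exact ⟨fun d hd => part1 d hd, fun d hd => part2 d hd⟩
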